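/- Let α, β, γ, c, τ, ρ, θ be real numbers with sin(α) = 2·sin(α/2)·cos(α/2) (automatic), sin(α/2) + cos(ρ)·sin(θ) ≠ 0 and sin(α/2) ≠ 0, satisfying: (i) −cos(γ) = cos(θ)·cos(α/2) + sin(θ)·sin(α/2)·cos(ρ); (ii) −cos(β) = −cos(θ)·cos(α/2) + sin(θ)·sin(α/2)·cos(ρ); (iii) sin(β)·sin(c) = sin(ρ)·sin(θ); and (iv) tan(τ/2)·(cos(α) + cos(β) + cos(γ) − 1) = sin(α)·sin(β)·sin(c). Then tan(τ/2) = −cos(α/2)·sin(ρ)·sin(θ) / (sin(α/2) + cos(ρ)·sin(θ)). -/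
import Mathlib


open Real

/-- The angle-bisector formula for the perimeter of a spherical triangle: if Q is
the intersection of the bisector of angle α with side BC, ρ is the spherical
distance from Q to A and θ is the angle between QC and QA, then
tan(τ/2) = −cos(α/2)·sin(ρ)·sin(θ)/(sin(α/2) + cos(ρ)·sin(θ)). -/
theorem bisector_perimeter_formula (α β γ c τ ρ θ : ℝ)
    (hauto : Real.sin α = 2 * Real.sin (α / 2) * Real.cos (α / 2))
    (hden : Real.sin (α / 2) + Real.cos ρ * Real.sin θ ≠ 0)
    (hα : Real.sin (α / 2) ≠ 0)
    (h1 : -Real.cos γ = Real.cos θ * Real.cos (α / 2) +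
      Real.sin θ * Real.sin (α / 2) * Real.cos ρ)
    (h2 : -Real.cos β = -(Real.cos θ * Real.cos (α / 2)) +
      Real.sin θ * Real.sin (α / 2) * Real.cos ρ)
    (h3 : Real.sin β * Real.sin c = Real.sin ρ * Real.sin θ)
    (h4 : Real.tan (τ / 2) * (Real.cos α + Real.cos β + Real.cos γ - 1) =
      Real.sin α * Real.sin β * Real.sin c) :
    Real.tan (τ / 2) =
      -(Real.cos (α / 2) * Real.sin ρ * Real.sin θ) /
        (Real.sin (α / 2) + Real.cos ρ * Real.sin θ) := by
  have hcos : Real.cos α = 1 - 2 * Real.sin (α / 2) ^ 2 := by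
    have h := Real.cos_two_mul (α / 2)
    rw [show 2 * (α / 2) = α by ring] at h
    linear_combination h + 2 * Real.sin_sq_add_cos_sq (α / 2)
  rw [eq_div_iff hden]
  have h2s : (-2 : ℝ) * Real.sin (α / 2) ≠ 0 := by simp [hα]
  apply mul_right_cancel₀ h2s
  linear_combination h4 + Real.tan (τ / 2) * h1 + Real.tan (τ / 2) * h2 -
    Real.tan (τ / 2) * hcos + Real.sin α * h3 + Real.sin ρ * Real.sin θ * hauto
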